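/- For all real numbers α, β ≥ 0, the supremum over x > 0 of α/(1+x) − β/x equals (√α − √β)₊², where (·)₊ denotes the positive part. -/

import Mathlib

/-- For all real numbers α, β ≥ 0, the supremum over x > 0 of α/(1+x) − β/x equals
(√α − √β)₊². -/
theorem stmt_0 (α β : ℝ) (hα : 0 ≤ α) (hβ : 0 ≤ β) :
    sSup ((fun x : ℝ => α / (1 + x) - β / x) '' {x : ℝ | 0 < x}) =
      (max (Real.sqrt α - Real.sqrt β) 0) ^ 2 := by
  set f : ℝ → ℝ := fun x => α / (1 + x) - β / x with hf
  set S := f '' {x : ℝ | 0 < x} with hS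
  set a := Real.sqrt α with haa
  set b := Real.sqrt β with hbb
  have ha : 0 ≤ a := Real.sqrt_nonneg _
  have hb : 0 ≤ b := Real.sqrt_nonneg _
  have hα2 : α = a ^ 2 := (Real.sq_sqrt hα).symm
  have hβ2 : β = b ^ 2 := (Real.sq_sqrt hβ).symm
  set M := (max (a - b) 0) ^ 2 with hM
  have hub : ∀ x ∈ {x : ℝ | 0 < x}, f x ≤ M := by
    intro x hx
    have hx : (0:ℝ) < x := hx
    have h1x : (0:ℝ) < 1 + x := by linarith
    show α / (1 + x) - β / x ≤ M
    rw [div_sub_div _ _ (ne_of_gt h1x) (ne_of_gt hx), div_le_iff₀ (by positivity)]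
    rcases le_or_gt a b with hab | hab
    · have h0 : max (a - b) 0 = 0 := max_eq_right (by linarith)
      rw [hM, h0]
      have hαβ : α ≤ β := by nlinarith
      nlinarith
    · have h0 : max (a - b) 0 = a - b := max_eq_left (by linarith)
      rw [hM, h0]
      nlinarith [sq_nonneg ((a - b) * x - b)]
  have hbdd : BddAbove S := ⟨M, by rintro y ⟨x, hx, rfl⟩; exact hub x hx⟩
  apply le_antisymm
  · exact Real.sSup_le (by rintro y ⟨x, hx, rfl⟩; exact hub x hx) (by positivity)
  · rcases le_or_gt a b with hab | hab
    · -- M = 0, approach via x → ∞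
      have hM0 : M = 0 := by rw [hM, max_eq_right (by linarith)]; ring
      rw [hM0]
      have htend : Filter.Tendsto f Filter.atTop (nhds 0) := by
        have h1 : Filter.Tendsto (fun x : ℝ => α / (1 + x)) Filter.atTop (nhds 0) :=
          Filter.Tendsto.div_atTop tendsto_const_nhds
            (Filter.tendsto_atTop_add_const_left _ 1 Filter.tendsto_id)
        have h2 : Filter.Tendsto (fun x : ℝ => β / x) Filter.atTop (nhds 0) :=
          Filter.Tendsto.div_atTop tendsto_const_nhds Filter.tendsto_id
        have := h1.sub h2
        simpa using this
      refine le_of_tendsto htend ?_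
      filter_upwards [Filter.eventually_gt_atTop 0] with x hx
      exact le_csSup hbdd ⟨x, hx, rfl⟩
    · rcases eq_or_lt_of_le hb with hb0 | hb0
      · -- β = 0, approach via x → 0⁺
        have hβ0 : β = 0 := by rw [hβ2, ← hb0]; ring
        have hMα : M = α := by rw [hM, max_eq_left (by linarith), ← hb0, hα2]; ring
        rw [hMα]
        have htend : Filter.Tendsto f (nhdsWithin 0 (Set.Ioi 0)) (nhds α) := by
          have hc : ContinuousAt (fun x : ℝ => α / (1 + x)) 0 := by
            exact ContinuousAt.div continuousAt_const
              (continuousAt_const.add continuousAt_id) (by norm_num)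
          have h1 : Filter.Tendsto (fun x : ℝ => α / (1 + x)) (nhdsWithin 0 (Set.Ioi 0))
              (nhds α) := by
            have := hc.tendsto.mono_left (nhdsWithin_le_nhds (s := Set.Ioi 0))
            simpa using this
          have heq : f = fun x : ℝ => α / (1 + x) := by
            funext x; simp [hf, hβ0]
          rw [heq]; exact h1
        refine le_of_tendsto htend ?_
        filter_upwards [self_mem_nhdsWithin] with x hx
        exact le_csSup hbdd ⟨x, hx, rfl⟩
      · -- attained at x₀ = b / (a - b)
        have hab' : 0 < a - b := by linarith
        set x₀ := b / (a - b) with hx₀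
        have hx₀pos : 0 < x₀ := div_pos hb0 hab'
        have h1x₀ : 1 + x₀ = a / (a - b) := by
          rw [hx₀, eq_div_iff hab'.ne', add_mul, div_mul_cancel₀ _ hab'.ne']; ring
        have hfx₀ : f x₀ = M := by
          have hMval : M = (a - b) ^ 2 := by rw [hM, max_eq_left (by linarith)]
          show α / (1 + x₀) - β / x₀ = M
          rw [h1x₀, hx₀, hMval, hα2, hβ2]
          have hane : a ≠ 0 := ne_of_gt (hb0.trans hab)
          have hbne : b ≠ 0 := ne_of_gt hb0
          field_simp
        exact le_csSup hbdd ⟨x₀, hx₀pos, hfx₀⟩
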